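/- arXiv:2003.13133 — 2 statements merged into one kernel-verified Lean document; each statement's English description precedes it below -/
import Mathlib

section
/- Let γ : I → 𝕊² be a C¹ regular curve parametrized by arc length, let s₀ ∈ I, and let ρ ∈ (0,π) satisfy κ⁺_γ(s₀) < cot ρ. Set 𝐯 = (cos ρ)γ(s₀) + (sin ρ)𝐧_γ(s₀). Then there exists σ > 0 such that d(𝐯, γ(s)) ≥ ρ for all s ∈ (s₀−σ, s₀+σ) ∩ I. -/
open MeasureTheory Real Set Filter Topology NNReal RealInnerProductSpace

noncomputable section

namespace Curves

/-- `ℝ³` with the Euclidean inner product. -/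
abbrev E3 : Type := EuclideanSpace ℝ (Fin 3)

/-- The cross product on `ℝ³`. -/
def cross (x y : E3) : E3 :=
  (EuclideanSpace.equiv (Fin 3) ℝ).symm
    ![x 1 * y 2 - x 2 * y 1, x 2 * y 0 - x 0 * y 2, x 0 * y 1 - x 1 * y 0]

/-- The intrinsic (angular) distance on the unit sphere `𝕊² ⊆ ℝ³`. -/
def sdist (x y : E3) : ℝ := Real.arccos (inner ℝ x y)

/-- `arccot : ℝ → (0, π)`. -/
def arccot (x : ℝ) : ℝ := π / 2 - Real.arctan x

/-- A `C¹` regular curve with values in the unit sphere `𝕊²`, defined on the interval `[a, b]`,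
recorded together with its (continuous, nonvanishing) derivative. -/
structure C1Curve (a b : ℝ) where
  toFun : ℝ → E3
  deriv : ℝ → E3
  mem_sphere : ∀ t ∈ Set.Icc a b, ‖toFun t‖ = 1
  hasDeriv : ∀ t ∈ Set.Icc a b, HasDerivWithinAt toFun (deriv t) (Set.Icc a b) t
  deriv_cont : ContinuousOn deriv (Set.Icc a b)
  regular : ∀ t ∈ Set.Icc a b, deriv t ≠ 0

variable {a b : ℝ}

/-- The unit tangent vector `𝐭_γ(t) = γ̇(t)/|γ̇(t)|`. -/
def tangent (γ : C1Curve a b) (t : ℝ) : E3 := ‖γ.deriv t‖⁻¹ • γ.deriv t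

/-- The unit normal vector `𝐧_γ(t) = γ(t) × 𝐭_γ(t)`. -/
def normal (γ : C1Curve a b) (t : ℝ) : E3 := cross (γ.toFun t) (tangent γ t)

/-- The length `L_γ` of the curve. -/
def clength (γ : C1Curve a b) : ℝ := ∫ t in a..b, ‖γ.deriv t‖

/-- The arc length function `s(t) = ∫_a^t |γ̇|`. -/
def arcLen (γ : C1Curve a b) (t : ℝ) : ℝ := ∫ u in a..t, ‖γ.deriv u‖

/-- The curve is parametrized by arc length. -/
def UnitSpeed (γ : C1Curve a b) : Prop := ∀ t ∈ Set.Icc a b, ‖γ.deriv t‖ = 1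

/-- The curve is parametrized with constant speed `|γ̇| ≡ L_γ`. -/
def ConstantSpeed (γ : C1Curve a b) : Prop := ∀ t ∈ Set.Icc a b, ‖γ.deriv t‖ = clength γ

/-- The circle of center `c ∈ 𝕊²` and spherical radius `r ∈ (0,π)`, oriented anticlockwise
about `c`, passes through `γ(t₁)` with the same unit tangent vector as `γ` there.
(The unit tangent of the anticlockwise circle at a point `x` on it is `(sin r)⁻¹ (c × x)`.) -/
def IsTangentCircleAt (γ : C1Curve a b) (t₁ : ℝ) (c : E3) (r : ℝ) : Prop :=
  ‖c‖ = 1 ∧ r ∈ Set.Ioo 0 π ∧ sdist (γ.toFun t₁) c = r ∧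
    tangent γ t₁ = (Real.sin r)⁻¹ • cross c (γ.toFun t₁)

/-- The circle of center `c` and radius `r` is tangent from the left to `γ` at `γ(t₁)`. -/
def TangentFromLeft (γ : C1Curve a b) (t₁ : ℝ) (c : E3) (r : ℝ) : Prop :=
  IsTangentCircleAt γ t₁ c r ∧
    ∃ δ > 0, ∀ t ∈ Set.Ioo (t₁ - δ) (t₁ + δ) ∩ Set.Icc a b, r ≤ sdist (γ.toFun t) c

/-- The circle of center `c` and radius `r` is tangent from the right to `γ` at `γ(t₁)`. -/
def TangentFromRight (γ : C1Curve a b) (t₁ : ℝ) (c : E3) (r : ℝ) : Prop :=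
  IsTangentCircleAt γ t₁ c r ∧
    ∃ δ > 0, ∀ t ∈ Set.Ioo (t₁ - δ) (t₁ + δ) ∩ Set.Icc a b, sdist (γ.toFun t) c ≤ r

/-- The upper curvature `κ⁺_γ(t)`: the infimum of `cot r` over all circles tangent from the
left to `γ` at `γ(t)` (with `inf ∅ = +∞`), as an extended real number. -/
def upperCurv (γ : C1Curve a b) (t : ℝ) : EReal :=
  sInf {x : EReal | ∃ c r, TangentFromLeft γ t c r ∧ x = ((Real.cot r : ℝ) : EReal)}

/-- The lower curvature `κ⁻_γ(t)`: the supremum of `cot r` over all circles tangent from the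
right to `γ` at `γ(t)` (with `sup ∅ = -∞`), as an extended real number. -/
def lowerCurv (γ : C1Curve a b) (t : ℝ) : EReal :=
  sSup {x : EReal | ∃ c r, TangentFromRight γ t c r ∧ x = ((Real.cot r : ℝ) : EReal)}

/-- The matrix with columns `x`, `y`, `z`. -/
def colMatrix (x y z : E3) : Matrix (Fin 3) (Fin 3) ℝ :=
  Matrix.of fun i j => ![x, y, z] j i

/-- The Frenet frame `𝔉_γ(t)`, the matrix with columns `γ(t)`, `𝐭_γ(t)`, `𝐧_γ(t)`. -/
def frenet (γ : C1Curve a b) (t : ℝ) : Matrix (Fin 3) (Fin 3) ℝ :=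
  colMatrix (γ.toFun t) (tangent γ t) (normal γ t)

/-- `SO₃(ℝ)`. -/
abbrev SO3 := Matrix.specialOrthogonalGroup (Fin 3) ℝ

/-- Lebesgue measure restricted to `[0,1]`. -/
def μ01 : Measure ℝ := volume.restrict (Set.Icc (0:ℝ) 1)

/-- Membership in `𝓘(P,Q)`: the Frenet frame equals `P` at `t = 0` and `Q` at `t = 1`. -/
def MemI (P Q : Matrix (Fin 3) (Fin 3) ℝ) (γ : C1Curve 0 1) : Prop :=
  frenet γ 0 = P ∧ frenet γ 1 = Q

/-- `κ` is the a.e. geodesic curvature of `γ : [0,1] → 𝕊²`: almost everywhere the unit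
tangent vector is differentiable with `d𝐭/dt = |γ̇| (-γ + κ 𝐧)`
(i.e. `𝐭' = -γ + κ𝐧` with respect to arc length). -/
def IsCurvature (γ : C1Curve 0 1) (κ : ℝ → ℝ) : Prop :=
  Measurable κ ∧
    ∀ᵐ t ∂μ01, HasDerivWithinAt (tangent γ)
      (‖γ.deriv t‖ • (-(γ.toFun t) + κ t • normal γ t)) (Set.Icc 0 1) t

/-- Membership in `𝓟_{κ₁}^{κ₂}(P,Q)`: `γ ∈ 𝓘(P,Q)`, `γ̇` is Lipschitz continuous, and the
a.e. defined geodesic curvature `κ` satisfies `κ₁ < essinf κ ≤ esssup κ < κ₂`. -/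
def MemP (κ₁ κ₂ : ℝ) (P Q : Matrix (Fin 3) (Fin 3) ℝ) (γ : C1Curve 0 1) : Prop :=
  MemI P Q γ ∧ (∃ K : ℝ≥0, LipschitzOnWith K γ.deriv (Set.Icc 0 1)) ∧
  ∃ κ : ℝ → ℝ, IsCurvature γ κ ∧
    (κ₁ : EReal) < essInf (fun t => ((κ t : ℝ) : EReal)) μ01 ∧
    essInf (fun t => ((κ t : ℝ) : EReal)) μ01 ≤ essSup (fun t => ((κ t : ℝ) : EReal)) μ01 ∧
    essSup (fun t => ((κ t : ℝ) : EReal)) μ01 < (κ₂ : EReal)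

/-- Membership in `𝓢_{κ₁}^{κ₂}(P,Q)`: `γ ∈ 𝓘(P,Q)` and
`κ₁ < inf_{t ∈ [0,1]} κ⁻_γ(t) ≤ sup_{t ∈ [0,1]} κ⁺_γ(t) < κ₂`. -/
def MemS (κ₁ κ₂ : ℝ) (P Q : Matrix (Fin 3) (Fin 3) ℝ) (γ : C1Curve 0 1) : Prop :=
  MemI P Q γ ∧
    (κ₁ : EReal) < (⨅ t : Set.Icc (0:ℝ) 1, lowerCurv γ ↑t) ∧
    (⨅ t : Set.Icc (0:ℝ) 1, lowerCurv γ ↑t) ≤ (⨆ t : Set.Icc (0:ℝ) 1, upperCurv γ ↑t) ∧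
    (⨆ t : Set.Icc (0:ℝ) 1, upperCurv γ ↑t) < (κ₂ : EReal)

/-- Pointwise two-sided curvature bounds `κ₁ < κ⁻_γ(t) ≤ κ⁺_γ(t) < κ₂` on the whole domain,
i.e. membership in `𝓛_{κ₁}^{κ₂}` (apart from the endpoint conditions). -/
def CurvBetween (κ₁ κ₂ : ℝ) (γ : C1Curve a b) : Prop :=
  ∀ t ∈ Set.Icc a b,
    (κ₁ : EReal) < lowerCurv γ t ∧ lowerCurv γ t ≤ upperCurv γ t ∧
      upperCurv γ t < (κ₂ : EReal)

/-- The `C⁰` distance `d⁰(α,β) = max_t d(α(t), β(t))`. -/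
def d0 (α β : C1Curve 0 1) : ℝ := ⨆ t : Set.Icc (0:ℝ) 1, sdist (α.toFun ↑t) (β.toFun ↑t)

/-- The `C¹` distance `d̄¹(α,β) = max_t [d(α(t),β(t)) + |α̇(t) - β̇(t)|]`. -/
def d1bar (α β : C1Curve 0 1) : ℝ :=
  ⨆ t : Set.Icc (0:ℝ) 1, (sdist (α.toFun ↑t) (β.toFun ↑t) + ‖α.deriv ↑t - β.deriv ↑t‖)

/-- `h(t) = t - t⁻¹`, a diffeomorphism `(0,∞) → ℝ`. -/
def hfun (t : ℝ) : ℝ := t - t⁻¹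

/-- The inverse of `h : (0,∞) → ℝ`. -/
def hInv (y : ℝ) : ℝ := Function.invFunOn hfun (Set.Ioi 0) y

/-- `h_{κ₁,κ₂}(t) = (κ₁ - t)⁻¹ + (κ₂ - t)⁻¹`, a diffeomorphism `(κ₁,κ₂) → ℝ`. -/
def hk (κ₁ κ₂ t : ℝ) : ℝ := (κ₁ - t)⁻¹ + (κ₂ - t)⁻¹

/-- The inverse of `h_{κ₁,κ₂} : (κ₁,κ₂) → ℝ`. -/
def hkInv (κ₁ κ₂ y : ℝ) : ℝ := Function.invFunOn (hk κ₁ κ₂) (Set.Ioo κ₁ κ₂) y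

/-- `(v, w)` is a `(κ₁,κ₂)`-strongly admissible pair of coefficients: `v = h⁻¹(v̂)` and
`w = v ⬝ h_{κ₁,κ₂}⁻¹(ŵ)` for some pair `(v̂, ŵ) ∈ L^∞[0,1] × L^∞[0,1]`; equivalently `v, w`
are measurable with `v > 0`, `w/v ∈ (κ₁,κ₂)`, and `h ∘ v` and `h_{κ₁,κ₂} ∘ (w/v)` are
bounded on `[0,1]`. -/
def StronglyAdmissiblePair (κ₁ κ₂ : ℝ) (v w : ℝ → ℝ) : Prop :=
  Measurable v ∧ Measurable w ∧
  (∀ t, 0 < v t) ∧ (∀ t, w t / v t ∈ Set.Ioo κ₁ κ₂) ∧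
  (∃ C : ℝ, ∀ t ∈ Set.Icc (0:ℝ) 1, |hfun (v t)| ≤ C) ∧
  (∃ C : ℝ, ∀ t ∈ Set.Icc (0:ℝ) 1, |hk κ₁ κ₂ (w t / v t)| ≤ C)

/-- The columns `f₁, f₂, f₃` form a Lipschitz (`W^{1,∞}`) solution of the frame ODE
`Φ' = Φ Λ` on `[0,1]`, where `Λ` has entries `Λ₁₂ = -v`, `Λ₂₁ = v`, `Λ₂₃ = -w`, `Λ₃₂ = w`. -/
def FrameODE (v w : ℝ → ℝ) (f₁ f₂ f₃ : ℝ → E3) : Prop :=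
  (∃ K : ℝ≥0, LipschitzOnWith K f₁ (Set.Icc 0 1)) ∧
  (∃ K : ℝ≥0, LipschitzOnWith K f₂ (Set.Icc 0 1)) ∧
  (∃ K : ℝ≥0, LipschitzOnWith K f₃ (Set.Icc 0 1)) ∧
  (∀ᵐ t ∂μ01,
    HasDerivWithinAt f₁ (v t • f₂ t) (Set.Icc 0 1) t ∧
    HasDerivWithinAt f₂ (-(v t) • f₁ t + w t • f₃ t) (Set.Icc 0 1) t ∧
    HasDerivWithinAt f₃ (-(w t) • f₂ t) (Set.Icc 0 1) t)

/-- The `(κ₁,κ₂)`-strongly admissible parametrized curve `f = Φ e₁` corresponds to the pair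
`(v̂, ŵ) ∈ ℝ × L^∞[0,1]` (with `v̂` constant), with frame solving `Φ' = ΦΛ`, `Φ(0) = P`,
`Φ(1) = Q`. -/
def Corr16 (κ₁ κ₂ : ℝ) (P Q : Matrix (Fin 3) (Fin 3) ℝ)
    (p : ℝ × Lp ℝ ⊤ μ01) (f : ℝ → E3) : Prop :=
  ∃ f₂ f₃ : ℝ → E3,
    FrameODE (fun _ => hInv p.1) (fun t => hInv p.1 * hkInv κ₁ κ₂ (p.2 t)) f f₂ f₃ ∧
    colMatrix (f 0) (f₂ 0) (f₃ 0) = P ∧ colMatrix (f 1) (f₂ 1) (f₃ 1) = Q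

/-- The set `B = {(v̂, ŵ) ∈ ℝ × L^∞[0,1] : Φ_{(v̂,ŵ)}(1) = Q}` (with `Φ_{(v̂,ŵ)}(0) = P`). -/
def BSet (κ₁ κ₂ : ℝ) (P Q : Matrix (Fin 3) (Fin 3) ℝ) : Set (ℝ × Lp ℝ ⊤ μ01) :=
  {p | ∃ f : ℝ → E3, Corr16 κ₁ κ₂ P Q p f}

end Curves

namespace Curves


lemma cross_smul_right' (x : E3) (a : ℝ) (y : E3) : cross x (a • y) = a • cross x y := by
  ext i
  fin_cases i <;>
    simp [cross, PiLp.smul_apply, smul_eq_mul] <;> ring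

lemma cross_cross_self' (x y : E3) :
    cross x (cross y x) = (⟪x,x⟫ : ℝ) • y - (⟪x,y⟫ : ℝ) • x := by
  ext i
  fin_cases i <;>
    simp [cross, PiLp.inner_apply, Fin.sum_univ_three, PiLp.smul_apply, PiLp.sub_apply,
      smul_eq_mul, EuclideanSpace.norm_sq_eq] <;> ring

lemma sdist_triangle' {x y z : E3} (hx : ‖x‖ = 1) (hy : ‖y‖ = 1) (hz : ‖z‖ = 1) :
    sdist x z ≤ sdist x y + sdist y z := by
  have habs : ∀ p q : E3, ‖p‖ = 1 → ‖q‖ = 1 → -1 ≤ (⟪p,q⟫ : ℝ) ∧ (⟪p,q⟫ : ℝ) ≤ 1 := by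
    intro p q hp hq
    have h := abs_real_inner_le_norm p q
    rw [hp, hq] at h
    constructor <;> [linarith [neg_abs_le (⟪p,q⟫ : ℝ)]; linarith [le_abs_self (⟪p,q⟫ : ℝ)]]
  obtain ⟨hxy1, hxy2⟩ := habs x y hx hy
  obtain ⟨hyz1, hyz2⟩ := habs y z hy hz
  obtain ⟨hxz1, hxz2⟩ := habs x z hx hz
  set α := Real.arccos (⟪x,y⟫ : ℝ) with hα
  set β := Real.arccos (⟪y,z⟫ : ℝ) with hβ
  have hα0 : 0 ≤ α := Real.arccos_nonneg _
  have hαπ : α ≤ π := Real.arccos_le_pi _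
  have hβ0 : 0 ≤ β := Real.arccos_nonneg _
  have hβπ : β ≤ π := Real.arccos_le_pi _
  have hcosα : Real.cos α = ⟪x,y⟫ := Real.cos_arccos hxy1 hxy2
  have hcosβ : Real.cos β = ⟪y,z⟫ := Real.cos_arccos hyz1 hyz2
  rcases le_or_gt (α + β) π with h | h
  · -- main case
    set u := x - (⟪x,y⟫ : ℝ) • y with hu
    set w := z - (⟪y,z⟫ : ℝ) • y with hw
    have hyy : (⟪y,y⟫ : ℝ) = 1 := by
      rw [real_inner_self_eq_norm_sq, hy]; norm_num
    have huw : (⟪u,w⟫ : ℝ) = ⟪x,z⟫ - (⟪x,y⟫ : ℝ) * ⟪y,z⟫ := by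
      simp only [hu, hw, inner_sub_left, inner_sub_right, real_inner_smul_left,
        real_inner_smul_right, hyy]
      rw [real_inner_comm y x]
      ring
    have hnu : ‖u‖ ^ 2 = 1 - (⟪x,y⟫ : ℝ) ^ 2 := by
      rw [← real_inner_self_eq_norm_sq]
      simp only [hu, inner_sub_left, inner_sub_right, real_inner_smul_left,
        real_inner_smul_right, hyy]
      rw [real_inner_comm y x, real_inner_self_eq_norm_sq, hx]
      ring
    have hnw : ‖w‖ ^ 2 = 1 - (⟪y,z⟫ : ℝ) ^ 2 := by
      rw [← real_inner_self_eq_norm_sq]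
      simp only [hw, inner_sub_left, inner_sub_right, real_inner_smul_left,
        real_inner_smul_right, hyy]
      rw [real_inner_comm z y, real_inner_self_eq_norm_sq, hz]
      ring
    have hsinα : Real.sin α = ‖u‖ := by
      rw [hα, Real.sin_arccos, ← hnu, Real.sqrt_sq (norm_nonneg u)]
    have hsinβ : Real.sin β = ‖w‖ := by
      rw [hβ, Real.sin_arccos, ← hnw, Real.sqrt_sq (norm_nonneg w)]
    have hlow : -(‖u‖ * ‖w‖) ≤ (⟪u,w⟫ : ℝ) := by
      have := abs_real_inner_le_norm u w
      linarith [neg_abs_le (⟪u,w⟫ : ℝ)]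
    have key : Real.cos (α + β) ≤ (⟪x,z⟫ : ℝ) := by
      rw [Real.cos_add, hcosα, hcosβ, hsinα, hsinβ]
      linarith [huw]
    have : Real.arccos (⟪x,z⟫ : ℝ) ≤ Real.arccos (Real.cos (α + β)) := by
      unfold Real.arccos
      have := Real.monotone_arcsin key
      linarith
    rw [Real.arccos_cos (by linarith) h] at this
    simpa [sdist] using this
  · have : sdist x z ≤ π := Real.arccos_le_pi _
    have h1 : sdist x y = α := rfl
    have h2 : sdist y z = β := rfl
    rw [h1, h2]
    linarith

lemma cot_anti {x y : ℝ} (hx : x ∈ Set.Ioo 0 π) (hy : y ∈ Set.Ioo 0 π) (hxy : x < y) :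
    Real.cot y < Real.cot x := by
  have hsx : 0 < Real.sin x := Real.sin_pos_of_pos_of_lt_pi hx.1 hx.2
  have hsy : 0 < Real.sin y := Real.sin_pos_of_pos_of_lt_pi hy.1 hy.2
  have hs : 0 < Real.sin (y - x) :=
    Real.sin_pos_of_pos_of_lt_pi (by linarith [hxy]) (by linarith [hx.1, hy.2])
  rw [Real.cot_eq_cos_div_sin, Real.cot_eq_cos_div_sin, div_lt_div_iff₀ hsy hsx]
  rw [Real.sin_sub] at hs
  nlinarith

/-- Claim 1: let `γ : I → 𝕊²` be a `C¹` regular curve parametrized by arc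
length, `s₀ ∈ I`, and `ρ ∈ (0,π)` with `κ⁺_γ(s₀) < cot ρ`; set
`𝐯 = (cos ρ)γ(s₀) + (sin ρ)𝐧_γ(s₀)`. Then there is `σ > 0` with `d(𝐯, γ(s)) ≥ ρ` for all
`s ∈ (s₀-σ, s₀+σ) ∩ I`. -/
theorem stmt_6 (a b : ℝ) (hab : a ≤ b) (γ : C1Curve a b) (hspeed : UnitSpeed γ)
    (s₀ : ℝ) (hs₀ : s₀ ∈ Set.Icc a b) (ρ : ℝ) (hρ : ρ ∈ Set.Ioo 0 π)
    (hcurv : upperCurv γ s₀ < ((Real.cot ρ : ℝ) : EReal))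
    (v : E3) (hv : v = Real.cos ρ • γ.toFun s₀ + Real.sin ρ • normal γ s₀) :
    ∃ σ > 0, ∀ s ∈ Set.Ioo (s₀ - σ) (s₀ + σ) ∩ Set.Icc a b, ρ ≤ sdist v (γ.toFun s) := by
  -- extract a tangent-from-left circle with cot r < cot ρ
  have hγ0 : ‖γ.toFun s₀‖ = 1 := γ.mem_sphere s₀ hs₀
  rw [upperCurv, sInf_lt_iff] at hcurv
  obtain ⟨x, ⟨c, r, hTL, hx⟩, hxlt⟩ := hcurv
  rw [hx, EReal.coe_lt_coe_iff] at hxlt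
  obtain ⟨⟨hc1, hr, hsd, htan⟩, δ, hδ, hδprop⟩ := hTL
  have hρr : ρ ≤ r := by
    by_contra hcon
    push_neg at hcon
    exact absurd (cot_anti hr hρ hcon) (not_lt.mpr hxlt.le)
  have hsinr : 0 < Real.sin r := Real.sin_pos_of_pos_of_lt_pi hr.1 hr.2
  -- inner products
  have hinner_le : |(⟪γ.toFun s₀, c⟫ : ℝ)| ≤ 1 := by
    have := abs_real_inner_le_norm (γ.toFun s₀) c
    rwa [hγ0, hc1, one_mul] at this
  have hγc : (⟪γ.toFun s₀, c⟫ : ℝ) = Real.cos r := by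
    rw [← hsd, sdist, Real.cos_arccos (by linarith [abs_le.mp hinner_le])
      (by linarith [abs_le.mp hinner_le])]
  have hγγ : (⟪γ.toFun s₀, γ.toFun s₀⟫ : ℝ) = 1 := by
    rw [real_inner_self_eq_norm_sq, hγ0]; norm_num
  have hcc : (⟪c, c⟫ : ℝ) = 1 := by
    rw [real_inner_self_eq_norm_sq, hc1]; norm_num
  -- the normal vector
  have hnorm : normal γ s₀ = (Real.sin r)⁻¹ • (c - Real.cos r • γ.toFun s₀) := by
    rw [normal, htan, cross_smul_right', cross_cross_self', hγγ, hγc, one_smul]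
  -- key inner products with v
  have hγn : (⟪γ.toFun s₀, normal γ s₀⟫ : ℝ) = 0 := by
    rw [hnorm]
    simp only [real_inner_smul_right, inner_sub_right, real_inner_smul_right, hγc, hγγ]
    ring
  have hcγ : (⟪c, γ.toFun s₀⟫ : ℝ) = Real.cos r := by
    rw [real_inner_comm]; exact hγc
  have hnγ : (⟪normal γ s₀, γ.toFun s₀⟫ : ℝ) = 0 := by
    rw [real_inner_comm]; exact hγn
  have hnc : (⟪normal γ s₀, c⟫ : ℝ) = Real.sin r := by
    rw [hnorm]
    simp only [real_inner_smul_left, inner_sub_left, hcc, hγc, hcγ]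
    have hsq : Real.sin r ^ 2 = 1 - Real.cos r ^ 2 := by
      have := Real.sin_sq_add_cos_sq r; linarith
    field_simp
    nlinarith
  have hnn : (⟪normal γ s₀, normal γ s₀⟫ : ℝ) = 1 := by
    nth_rewrite 2 [hnorm]
    simp only [real_inner_smul_right, inner_sub_right, hnc, hnγ, hγn]
    field_simp
    ring
  -- v is a unit vector
  have hv1 : ‖v‖ = 1 := by
    have hvv : (⟪v, v⟫ : ℝ) = 1 := by
      rw [hv]
      simp only [inner_add_left, inner_add_right, real_inner_smul_left,
        real_inner_smul_right, hγγ, hγn, hnγ, hnn]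
      nlinarith [Real.sin_sq_add_cos_sq ρ]
    have h2 : ‖v‖ ^ 2 = 1 := by rw [← real_inner_self_eq_norm_sq, hvv]
    rw [← Real.sqrt_sq (norm_nonneg v), h2, Real.sqrt_one]
  -- distance from v to c
  have hvc : sdist v c = r - ρ := by
    have hvcinner : (⟪v, c⟫ : ℝ) = Real.cos (r - ρ) := by
      rw [hv, Real.cos_sub]
      simp only [inner_add_left, real_inner_smul_left, hγc, hnc]
      ring
    rw [sdist, hvcinner, Real.arccos_cos (by linarith) (by linarith [hρ.1, hr.2])]
  -- conclude using the triangle inequality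
  refine ⟨δ, hδ, fun s hs => ?_⟩
  have hγs : ‖γ.toFun s‖ = 1 := γ.mem_sphere s hs.2
  have htri : sdist (γ.toFun s) c ≤ sdist (γ.toFun s) v + sdist v c :=
    sdist_triangle' hγs hv1 hc1
  have hge : r ≤ sdist (γ.toFun s) c := hδprop s hs
  have hsymm : sdist (γ.toFun s) v = sdist v (γ.toFun s) := by
    rw [sdist, sdist, real_inner_comm]
  rw [hvc, hsymm] at htri
  linarith


end Curves
end
end

section
/- Let −∞ < κ₁ < κ₂ < +∞ and P, Q ∈ SO₃(ℝ). On the set 𝓟_{κ₁}^{κ₂}(P,Q), with curves parametrized with constant speed on [0,1], the metrics d⁰ and d̄¹ induce the same topology; equivalently, for α_k, α ∈ 𝓟_{κ₁}^{κ₂}(P,Q), d⁰(α_k, α) → 0 if and only if d̄¹(α_k, α) → 0. -/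
open MeasureTheory Real Set Filter Topology NNReal RealInnerProductSpace

noncomputable section

namespace Curves

section Aux

lemma cross_apply (x y : E3) :
    cross x y = (WithLp.toLp 2 ![x 1 * y 2 - x 2 * y 1, x 2 * y 0 - x 0 * y 2,
      x 0 * y 1 - x 1 * y 0] : EuclideanSpace ℝ (Fin 3)) := rfl

lemma norm_sq_E3 (v : E3) : ‖v‖ ^ 2 = v 0 ^ 2 + v 1 ^ 2 + v 2 ^ 2 := by
  rw [EuclideanSpace.norm_eq, Real.sq_sqrt (by positivity)]
  simp [Fin.sum_univ_three]

lemma inner_E3 (x y : E3) : (inner ℝ x y : ℝ) = x 0 * y 0 + x 1 * y 1 + x 2 * y 2 := by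
  simp [PiLp.inner_apply, Fin.sum_univ_three]
  ring

lemma norm_cross_le (x y : E3) : ‖cross x y‖ ≤ ‖x‖ * ‖y‖ := by
  have h1 : ‖cross x y‖ ^ 2 + (inner ℝ x y : ℝ) ^ 2 = (‖x‖ * ‖y‖) ^ 2 := by
    rw [norm_sq_E3, inner_E3, mul_pow, norm_sq_E3, norm_sq_E3, cross_apply]
    simp [Fin.isValue]
    ring
  nlinarith [norm_nonneg (cross x y), norm_nonneg x, norm_nonneg y,
    sq_nonneg (inner ℝ x y : ℝ), mul_nonneg (norm_nonneg x) (norm_nonneg y)]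

lemma continuous_cross : Continuous (fun p : E3 × E3 => cross p.1 p.2) := by
  have hg : Continuous (fun p : E3 × E3 => (![p.1 1 * p.2 2 - p.1 2 * p.2 1,
      p.1 2 * p.2 0 - p.1 0 * p.2 2, p.1 0 * p.2 1 - p.1 1 * p.2 0] : Fin 3 → ℝ)) := by
    apply continuous_pi
    intro i
    fin_cases i <;> simp <;> fun_prop
  exact ((EuclideanSpace.equiv (Fin 3) ℝ).symm.continuous).comp hg

lemma sdist_nonneg' (x y : E3) : 0 ≤ sdist x y := Real.arccos_nonneg _

lemma sdist_le_pi' (x y : E3) : sdist x y ≤ π := Real.arccos_le_pi _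

lemma norm_sub_le_sdist {x y : E3} (hx : ‖x‖ = 1) (hy : ‖y‖ = 1) :
    ‖x - y‖ ≤ sdist x y := by
  have hi : |(inner ℝ x y : ℝ)| ≤ 1 := by
    simpa [hx, hy] using abs_real_inner_le_norm x y
  have h1 : (-1 : ℝ) ≤ inner ℝ x y := by linarith [abs_le.mp hi |>.1]
  have h2 : (inner ℝ x y : ℝ) ≤ 1 := (abs_le.mp hi).2
  have hcos : Real.cos (sdist x y) = inner ℝ x y := Real.cos_arccos h1 h2
  have hsq : ‖x - y‖ ^ 2 = 2 - 2 * (inner ℝ x y : ℝ) := by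
    rw [norm_sub_sq_real, hx, hy]; ring
  have hb := Real.one_sub_sq_div_two_le_cos (x := sdist x y)
  rw [hcos] at hb
  have : ‖x - y‖ ^ 2 ≤ sdist x y ^ 2 := by rw [hsq]; linarith
  nlinarith [norm_nonneg (x - y), sdist_nonneg' x y]

end Aux


section Crux

/-- average of `f` near `a` is close to `f a` for Lipschitz-like `f`. -/
lemma avg_close (f : ℝ → E3) (K' : ℝ) (hK' : 0 ≤ K')
    (hlip : ∀ s ∈ Icc (0:ℝ) 1, ∀ t ∈ Icc (0:ℝ) 1, ‖f s - f t‖ ≤ K' * |s - t|)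
    (hfc : ContinuousOn f (Icc 0 1))
    (a h : ℝ) (ha : a ∈ Icc (0:ℝ) 1) (hh : 0 < h) (hah : a + h ≤ 1) :
    ‖h⁻¹ • (∫ u in a..(a+h), f u) - f a‖ ≤ K' * h := by
  have hsub : Set.uIcc a (a+h) ⊆ Icc (0:ℝ) 1 := by
    rw [Set.uIcc_of_le (by linarith)]
    exact Set.Icc_subset_Icc ha.1 hah
  have h1 : (∫ u in a..(a+h), f u) - h • f a = ∫ u in a..(a+h), (f u - f a) := by
    rw [intervalIntegral.integral_sub ((hfc.mono hsub).intervalIntegrable)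
      intervalIntegrable_const, intervalIntegral.integral_const]
    simp
  have h2 : ‖∫ u in a..(a+h), (f u - f a)‖ ≤ (K' * h) * |a + h - a| := by
    apply intervalIntegral.norm_integral_le_of_norm_le_const
    intro u hu
    rw [Set.uIoc_of_le (by linarith)] at hu
    have hu' : u ∈ Icc (0:ℝ) 1 := ⟨by linarith [ha.1, hu.1], by linarith [hu.2]⟩
    calc ‖f u - f a‖ ≤ K' * |u - a| := hlip u hu' a ha
      _ ≤ K' * h := by
          apply mul_le_mul_of_nonneg_left _ hK'
          rw [abs_le]; constructor <;> [linarith [hu.1]; linarith [hu.2]]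
  have h3 : h⁻¹ • (∫ u in a..(a+h), f u) - f a
      = h⁻¹ • ((∫ u in a..(a+h), f u) - h • f a) := by
    rw [smul_sub, smul_smul, inv_mul_cancel₀ hh.ne', one_smul]
  rw [h3, norm_smul, h1]
  rw [norm_inv, Real.norm_eq_abs, abs_of_pos hh]
  calc h⁻¹ * ‖∫ u in a..(a+h), (f u - f a)‖ ≤ h⁻¹ * ((K' * h) * |a + h - a|) := by
        apply mul_le_mul_of_nonneg_left h2 (by positivity)
    _ = K' * h := by
        rw [show a + h - a = h by ring, abs_of_pos hh]
        field_simp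

lemma lip_of_ae_deriv (f g : ℝ → E3) (K C : ℝ) (hC : 0 ≤ C)
    (hlip : ∀ s ∈ Icc (0:ℝ) 1, ∀ t ∈ Icc (0:ℝ) 1, ‖f s - f t‖ ≤ K * |s - t|)
    (hae : ∀ᵐ t ∂μ01, HasDerivWithinAt f (g t) (Set.Icc 0 1) t ∧ ‖g t‖ ≤ C)
    (hg : AEStronglyMeasurable g μ01) :
    ∀ s ∈ Icc (0:ℝ) 1, ∀ t ∈ Icc (0:ℝ) 1, ‖f s - f t‖ ≤ C * |s - t| := by
  set K' := max K 0 with hK'def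
  have hK' : 0 ≤ K' := le_max_right _ _
  have hlip' : ∀ s ∈ Icc (0:ℝ) 1, ∀ t ∈ Icc (0:ℝ) 1, ‖f s - f t‖ ≤ K' * |s - t| :=
    fun s hs t ht => (hlip s hs t ht).trans
      (mul_le_mul_of_nonneg_right (le_max_left _ _) (abs_nonneg _))
  have hfc : ContinuousOn f (Icc 0 1) := by
    intro t ht
    rw [Metric.continuousWithinAt_iff]
    intro ε hε
    refine ⟨ε / (K' + 1), by positivity, fun u hu hd => ?_⟩
    rw [dist_eq_norm]
    calc ‖f u - f t‖ ≤ K' * |u - t| := hlip' u hu t ht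
      _ ≤ K' * (ε / (K' + 1)) := by
          apply mul_le_mul_of_nonneg_left _ hK'
          rw [← Real.dist_eq]; exact hd.le
      _ < (K' + 1) * (ε / (K' + 1)) := by
          apply mul_lt_mul_of_pos_right (by linarith) (by positivity)
      _ = ε := by field_simp
  have haev : ∀ᵐ t ∂(volume : Measure ℝ), t ∈ Icc (0:ℝ) 1 →
      (HasDerivWithinAt f (g t) (Set.Icc 0 1) t ∧ ‖g t‖ ≤ C) :=
    (ae_restrict_iff' measurableSet_Icc).mp hae
  -- the core estimate for 0 ≤ x < y < 1
  have core : ∀ x y : ℝ, 0 ≤ x → x < y → y < 1 → ‖f y - f x‖ ≤ C * (y - x) := by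
    intro x y hx hxy hy1
    have hxI : x ∈ Icc (0:ℝ) 1 := ⟨hx, by linarith⟩
    have hyI : y ∈ Icc (0:ℝ) 1 := ⟨by linarith, hy1.le⟩
    set h : ℕ → ℝ := fun n => (1 - y) / (n + 1) with hdef
    have hpos : ∀ n, 0 < h n := fun n => div_pos (by linarith) (by positivity)
    have hle : ∀ n, h n ≤ 1 - y := fun n => by
      apply div_le_self (by linarith)
      push_cast; linarith [Nat.cast_nonneg (α := ℝ) n]
    have hto : Tendsto h atTop (𝓝 0) := by
      have h2 := tendsto_one_div_add_atTop_nhds_zero_nat.const_mul (1 - y)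
      rw [mul_zero] at h2
      convert h2 using 2 with n
      rw [hdef]; field_simp
    set F : ℕ → ℝ → E3 := fun n u => (h n)⁻¹ • (f (u + h n) - f u) with hFdef
    have hint : ∀ a b : ℝ, a ∈ Icc (0:ℝ) 1 → b ∈ Icc (0:ℝ) 1 →
        IntervalIntegrable f volume a b := by
      intro a b haI hbI
      apply ContinuousOn.intervalIntegrable
      apply hfc.mono
      rw [Set.uIcc_eq_union]
      exact Set.union_subset (Set.Icc_subset_Icc haI.1 hbI.2)
        (Set.Icc_subset_Icc hbI.1 haI.2)
    -- step 2 : integral identity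
    have hid : ∀ n, (∫ u in x..y, F n u)
        = (h n)⁻¹ • ((∫ u in y..(y + h n), f u) - (∫ u in x..(x + h n), f u)) := by
      intro n
      have hyh : y + h n ∈ Icc (0:ℝ) 1 := ⟨by linarith [hpos n], by linarith [hle n]⟩
      have hxh : x + h n ∈ Icc (0:ℝ) 1 := ⟨by linarith [hpos n], by nlinarith [hle n, hpos n]⟩
      have e1 : (∫ u in x..y, f (u + h n)) = ∫ u in (x + h n)..(y + h n), f u :=
        intervalIntegral.integral_comp_add_right f (h n)
      have i1 : IntervalIntegrable (fun u => f (u + h n)) volume x y := by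
        have := (hint (x + h n) (y + h n) hxh hyh).comp_add_right (h n)
        simpa using this
      have i2 : IntervalIntegrable f volume x y := hint x y hxI hyI
      have e2 : (∫ u in x..y, F n u)
          = (h n)⁻¹ • ((∫ u in x..y, f (u + h n)) - ∫ u in x..y, f u) := by
        rw [← intervalIntegral.integral_sub i1 i2, ← intervalIntegral.integral_smul]
      rw [e2, e1]
      congr 1
      have a1 : (∫ u in x..(y + h n), f u)
          = (∫ u in x..y, f u) + ∫ u in y..(y + h n), f u :=
        (intervalIntegral.integral_add_adjacent_intervals i2 (hint y (y + h n) hyI hyh)).symm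
      have a2 : (∫ u in x..(y + h n), f u)
          = (∫ u in x..(x + h n), f u) + ∫ u in (x + h n)..(y + h n), f u :=
        (intervalIntegral.integral_add_adjacent_intervals (hint x (x + h n) hxI hxh)
          (hint (x + h n) (y + h n) hxh hyh)).symm
      have key := a1.symm.trans a2
      rw [add_comm (∫ u in x..(x + h n), f u) _] at key
      rw [← sub_eq_iff_eq_add] at key
      rw [← key]; abel
    -- step 3 : tendsto to f y - f x
    have step3 : Tendsto (fun n => ∫ u in x..y, F n u) atTop (𝓝 (f y - f x)) := by
      rw [tendsto_iff_norm_sub_tendsto_zero]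
      apply squeeze_zero_norm (a := fun n => K' * h n + K' * h n)
      · intro n
        rw [norm_norm, hid n]
        have hyh : y + h n ≤ 1 := by linarith [hle n]
        have hxh : x + h n ≤ 1 := by nlinarith [hle n, hpos n]
        have b1 := avg_close f K' hK' hlip' hfc y (h n) hyI (hpos n) hyh
        have b2 := avg_close f K' hK' hlip' hfc x (h n) hxI (hpos n) hxh
        have hrw : (h n)⁻¹ • ((∫ u in y..(y + h n), f u) - (∫ u in x..(x + h n), f u))
              - (f y - f x)
            = ((h n)⁻¹ • (∫ u in y..(y + h n), f u) - f y)
              - ((h n)⁻¹ • (∫ u in x..(x + h n), f u) - f x) := by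
          rw [smul_sub]; abel
        rw [hrw]
        exact (norm_sub_le _ _).trans (add_le_add b1 b2)
      · have h3 := (hto.const_mul K').const_mul (2:ℝ)
        rw [mul_zero, mul_zero] at h3
        convert h3 using 2 with n
        ring
    -- step 4 : dominated convergence
    have step4 : Tendsto (fun n => ∫ u in x..y, F n u) atTop (𝓝 (∫ u in x..y, g u)) := by
      have hsubI : Set.Ioc x y ⊆ Icc (0:ℝ) 1 :=
        fun u hu => ⟨by linarith [hu.1], by linarith [hu.2]⟩
      apply intervalIntegral.tendsto_integral_filter_of_dominated_convergence
        (bound := fun _ => K')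
      · apply Filter.Eventually.of_forall
        intro n
        apply ContinuousOn.aestronglyMeasurable _ measurableSet_uIoc
        rw [Set.uIoc_of_le hxy.le]
        show ContinuousOn (fun u => (h n)⁻¹ • (f (u + h n) - f u)) (Ioc x y)
        apply ContinuousOn.fun_smul continuousOn_const
        apply ContinuousOn.sub _ (hfc.mono hsubI)
        apply ContinuousOn.comp hfc (continuous_id.add continuous_const).continuousOn
        intro u hu
        have hu' := hsubI hu
        show u + h n ∈ Icc (0:ℝ) 1
        exact ⟨by linarith [hu'.1, hpos n], by linarith [hu.2, hle n]⟩
      · apply Filter.Eventually.of_forall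
        intro n
        apply Filter.Eventually.of_forall
        intro u hu
        rw [Set.uIoc_of_le hxy.le] at hu
        have hu' := hsubI hu
        have huh : u + h n ∈ Icc (0:ℝ) 1 :=
          ⟨by linarith [hu'.1, hpos n], by linarith [hu.2, hle n]⟩
        have := hlip' (u + h n) huh u hu'
        rw [show u + h n - u = h n by ring, abs_of_pos (hpos n)] at this
        calc ‖F n u‖ = (h n)⁻¹ * ‖f (u + h n) - f u‖ := by
              rw [hFdef]; simp [norm_smul, abs_of_pos (hpos n)]
          _ ≤ (h n)⁻¹ * (K' * h n) := by
              apply mul_le_mul_of_nonneg_left this (inv_nonneg.mpr (hpos n).le)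
          _ = K' := by
              rw [mul_comm K' (h n), ← mul_assoc, inv_mul_cancel₀ (hpos n).ne', one_mul]
      · exact intervalIntegrable_const
      · filter_upwards [haev] with u hu hmem
        rw [Set.uIoc_of_le hxy.le] at hmem
        have hu' := hsubI hmem
        obtain ⟨hd, -⟩ := hu hu'
        rw [hasDerivWithinAt_iff_tendsto_slope] at hd
        have hFs : ∀ n, F n u = slope f u (u + h n) := by
          intro n
          rw [hFdef]
          simp [slope, vsub_eq_sub, add_sub_cancel_left]
        simp only [hFs]
        apply hd.comp
        rw [tendsto_nhdsWithin_iff]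
        constructor
        · have := hto.const_add u
          rw [add_zero] at this
          exact this
        · apply Filter.Eventually.of_forall
          intro n
          refine ⟨⟨by linarith [hu'.1, hpos n], by linarith [hmem.2, hle n]⟩, ?_⟩
          simp only [Set.mem_singleton_iff]
          intro hcon
          have := hpos n
          nlinarith [congrArg (fun z => z - u) hcon]
    -- combine
    have heq : f y - f x = ∫ u in x..y, g u := tendsto_nhds_unique step3 step4
    rw [heq]
    have hb : ∀ᵐ t ∂(volume.restrict (Set.uIoc x y)), ‖g t‖ ≤ (fun _ => C) t := by
      rw [ae_restrict_iff' measurableSet_uIoc]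
      filter_upwards [haev] with u hu hmem
      rw [Set.uIoc_of_le hxy.le] at hmem
      exact (hu ⟨by linarith [hmem.1], by linarith [hmem.2]⟩).2
    have := intervalIntegral.norm_integral_le_abs_of_norm_le hb intervalIntegrable_const
    rw [intervalIntegral.integral_const, smul_eq_mul] at this
    calc ‖∫ u in x..y, g u‖ ≤ |(y - x) * C| := this
      _ = C * (y - x) := by rw [abs_of_nonneg (by nlinarith), mul_comm]
  -- extend to x ≤ y (allowing y = 1 and x = y)
  have ext : ∀ x y : ℝ, x ∈ Icc (0:ℝ) 1 → y ∈ Icc (0:ℝ) 1 → x ≤ y →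
      ‖f y - f x‖ ≤ C * (y - x) := by
    intro x y hxI hyI hxy
    rcases eq_or_lt_of_le hxy with rfl | hlt
    · simp
    rcases lt_or_eq_of_le hyI.2 with hy1 | hy1
    · exact core x y hxI.1 hlt hy1
    subst hy1
    apply le_of_forall_pos_le_add
    intro ε hε
    set δ : ℝ := min ((1 - x) / 2) (ε / (K' + 1)) with hδdef
    have hδpos : 0 < δ := lt_min (by linarith) (by positivity)
    set z : ℝ := 1 - δ with hzdef
    have hδle : δ ≤ (1 - x) / 2 := min_le_left _ _
    have hxz : x < z := by
      rw [hzdef]; linarith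
    have hz1 : z < 1 := by rw [hzdef]; linarith
    have hzI : z ∈ Icc (0:ℝ) 1 := ⟨by linarith [hxI.1], hz1.le⟩
    have hc := core x z hxI.1 hxz hz1
    have h2 : ‖f 1 - f z‖ ≤ K' * δ := by
      have hz' := hlip' 1 (by norm_num) z hzI
      have habs : |(1:ℝ) - z| = δ := by
        rw [hzdef, abs_of_nonneg (by linarith)]; ring
      calc ‖f 1 - f z‖ ≤ K' * |(1:ℝ) - z| := hz'
        _ = K' * δ := by rw [habs]
    have h3 : K' * δ ≤ ε := by
      have : δ ≤ ε / (K' + 1) := min_le_right _ _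
      calc K' * δ ≤ K' * (ε / (K' + 1)) := mul_le_mul_of_nonneg_left this hK'
        _ ≤ (K' + 1) * (ε / (K' + 1)) := by
            apply mul_le_mul_of_nonneg_right (by linarith) (by positivity)
        _ = ε := by field_simp
    calc ‖f 1 - f x‖ ≤ ‖f 1 - f z‖ + ‖f z - f x‖ := by
          have : f 1 - f x = (f 1 - f z) + (f z - f x) := by abel
          rw [this]; exact norm_add_le _ _
      _ ≤ K' * δ + C * (z - x) := add_le_add h2 hc
      _ ≤ ε + C * (1 - x) := by
          have : C * (z - x) ≤ C * (1 - x) :=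
            mul_le_mul_of_nonneg_left (by linarith) hC
          linarith
      _ = C * (1 - x) + ε := by ring
  intro s hs t ht
  rcases le_total t s with hts | hst
  · have := ext t s ht hs hts
    rwa [abs_of_nonneg (by linarith)]
  · have := ext s t hs ht hst
    rw [norm_sub_rev] at this
    rwa [abs_of_nonpos (by linarith), neg_sub]

end Crux


section CurveLemmas

lemma mu01_def : μ01 = volume.restrict (Set.Icc (0:ℝ) 1) := rfl

lemma contOn_toFun (γ : C1Curve 0 1) : ContinuousOn γ.toFun (Icc 0 1) :=
  fun t ht => (γ.hasDeriv t ht).continuousWithinAt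

lemma contOn_tangent (γ : C1Curve 0 1) : ContinuousOn (tangent γ) (Icc 0 1) := by
  show ContinuousOn (fun t => ‖γ.deriv t‖⁻¹ • γ.deriv t) _
  apply ContinuousOn.fun_smul
  · exact (γ.deriv_cont.norm).inv₀ (fun t ht => norm_ne_zero_iff.mpr (γ.regular t ht))
  · exact γ.deriv_cont

lemma contOn_normal (γ : C1Curve 0 1) : ContinuousOn (normal γ) (Icc 0 1) := by
  have h : normal γ = (fun p : E3 × E3 => cross p.1 p.2) ∘
      (fun t => (γ.toFun t, tangent γ t)) := rfl
  rw [h]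
  exact continuous_cross.comp_continuousOn ((contOn_toFun γ).prodMk (contOn_tangent γ))

lemma clength_pos {γ : C1Curve 0 1} (hcs : ConstantSpeed γ) : 0 < clength γ := by
  have h0 : (0:ℝ) ∈ Icc (0:ℝ) 1 := by norm_num
  rw [← hcs 0 h0]
  exact norm_pos_iff.mpr (γ.regular 0 h0)

lemma deriv_eq_smul_tangent {γ : C1Curve 0 1} (hcs : ConstantSpeed γ) {t : ℝ}
    (ht : t ∈ Icc (0:ℝ) 1) : γ.deriv t = clength γ • tangent γ t := by
  unfold tangent
  rw [hcs t ht, smul_smul, mul_inv_cancel₀ (clength_pos hcs).ne', one_smul]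

lemma norm_tangent (γ : C1Curve 0 1) {t : ℝ} (ht : t ∈ Icc (0:ℝ) 1) :
    ‖tangent γ t‖ = 1 := by
  unfold tangent
  rw [norm_smul, norm_inv, norm_norm,
    inv_mul_cancel₀ (norm_ne_zero_iff.mpr (γ.regular t ht))]

lemma norm_normal_le (γ : C1Curve 0 1) {t : ℝ} (ht : t ∈ Icc (0:ℝ) 1) :
    ‖normal γ t‖ ≤ 1 := by
  unfold normal
  calc ‖cross (γ.toFun t) (tangent γ t)‖ ≤ ‖γ.toFun t‖ * ‖tangent γ t‖ := norm_cross_le _ _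
    _ = 1 := by rw [γ.mem_sphere t ht, norm_tangent γ ht, one_mul]

/-- Main quantitative consequence of membership in `𝓟`: the derivative is Lipschitz with
constant `L² (1 + M)` where `M = max |κ₁| |κ₂|`. -/
lemma deriv_lipschitz {κ₁ κ₂ : ℝ} {P Q : Matrix (Fin 3) (Fin 3) ℝ} {γ : C1Curve 0 1}
    (hcs : ConstantSpeed γ) (hmem : MemP κ₁ κ₂ P Q γ) :
    ∀ s ∈ Icc (0:ℝ) 1, ∀ t ∈ Icc (0:ℝ) 1,
      ‖γ.deriv s - γ.deriv t‖ ≤ (clength γ)^2 * (1 + max |κ₁| |κ₂|) * |s - t| := by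
  obtain ⟨-, ⟨K, hK⟩, κ, ⟨hκmeas, hκae⟩, hinf, -, hsup⟩ := hmem
  set L := clength γ with hLdef
  have hL : 0 < L := clength_pos hcs
  set M := max |κ₁| |κ₂| with hMdef
  have hM : 0 ≤ M := le_trans (abs_nonneg κ₁) (le_max_left _ _)
  -- a.e. bounds on κ
  have hk2 : ∀ᵐ t ∂μ01, (κ t : ℝ) < κ₂ := by
    have h1 : ∀ᵐ t ∂μ01, ((κ t : ℝ) : EReal) ≤ essSup (fun t => ((κ t : ℝ) : EReal)) μ01 :=
      ae_le_essSup
    filter_upwards [h1] with t ht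
    have := lt_of_le_of_lt ht hsup
    exact_mod_cast this
  have hk1 : ∀ᵐ t ∂μ01, κ₁ < κ t := by
    have h1 : ∀ᵐ t ∂μ01, essInf (fun t => ((κ t : ℝ) : EReal)) μ01 ≤ ((κ t : ℝ) : EReal) :=
      ae_essInf_le
    filter_upwards [h1] with t ht
    have := lt_of_lt_of_le hinf ht
    exact_mod_cast this
  have habs : ∀ᵐ t ∂μ01, |κ t| ≤ M := by
    filter_upwards [hk1, hk2] with t h1 h2
    rw [abs_le]
    constructor
    · have : -|κ₁| ≤ κ₁ := neg_abs_le κ₁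
      have h3 : -M ≤ -|κ₁| := neg_le_neg (le_max_left _ _)
      linarith
    · have : κ₂ ≤ |κ₂| := le_abs_self κ₂
      have h3 : |κ₂| ≤ M := le_max_right _ _
      linarith
  set g : ℝ → E3 := fun t => ‖γ.deriv t‖ • (-(γ.toFun t) + κ t • normal γ t) with hgdef
  have hae' : ∀ᵐ t ∂μ01, HasDerivWithinAt (tangent γ) (g t) (Set.Icc 0 1) t ∧
      ‖g t‖ ≤ L * (1 + M) := by
    rw [mu01_def]
    rw [mu01_def] at hκae habs
    filter_upwards [hκae, habs, ae_restrict_mem measurableSet_Icc] with t h1 h2 ht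
    refine ⟨h1, ?_⟩
    rw [hgdef]
    simp only
    rw [norm_smul, norm_norm, hcs t ht]
    apply mul_le_mul_of_nonneg_left _ hL.le
    calc ‖-(γ.toFun t) + κ t • normal γ t‖ ≤ ‖-(γ.toFun t)‖ + ‖κ t • normal γ t‖ :=
          norm_add_le _ _
      _ ≤ 1 + M := by
          rw [norm_neg, γ.mem_sphere t ht, norm_smul, Real.norm_eq_abs]
          have := mul_le_mul h2 (norm_normal_le γ ht) (norm_nonneg _) hM
          rw [mul_one] at this
          linarith
  have hgmeas : AEStronglyMeasurable g μ01 := by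
    rw [mu01_def]
    show AEStronglyMeasurable (fun t => ‖γ.deriv t‖ • (-(γ.toFun t) + κ t • normal γ t)) _
    apply AEStronglyMeasurable.fun_smul
    · exact (γ.deriv_cont.norm).aestronglyMeasurable measurableSet_Icc
    · apply AEStronglyMeasurable.add
      · exact ((contOn_toFun γ).aestronglyMeasurable measurableSet_Icc).neg
      · exact (hκmeas.aestronglyMeasurable.restrict).smul
          ((contOn_normal γ).aestronglyMeasurable measurableSet_Icc)
  have hlipT : ∀ s ∈ Icc (0:ℝ) 1, ∀ t ∈ Icc (0:ℝ) 1,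
      ‖tangent γ s - tangent γ t‖ ≤ ((K : ℝ) / L) * |s - t| := by
    intro s hs t ht
    have h1 : tangent γ s - tangent γ t = L⁻¹ • (γ.deriv s - γ.deriv t) := by
      rw [smul_sub]
      rw [deriv_eq_smul_tangent hcs hs, deriv_eq_smul_tangent hcs ht]
      rw [smul_smul, smul_smul, inv_mul_cancel₀ hL.ne', one_smul, one_smul]
    rw [h1, norm_smul, norm_inv, Real.norm_eq_abs, abs_of_pos hL]
    have h2 : ‖γ.deriv s - γ.deriv t‖ ≤ (K : ℝ) * |s - t| := by
      have := hK.dist_le_mul s hs t ht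
      rwa [dist_eq_norm, Real.dist_eq] at this
    calc L⁻¹ * ‖γ.deriv s - γ.deriv t‖ ≤ L⁻¹ * ((K:ℝ) * |s - t|) :=
          mul_le_mul_of_nonneg_left h2 (inv_nonneg.mpr hL.le)
      _ = (K:ℝ) / L * |s - t| := by field_simp
  have key := lip_of_ae_deriv (tangent γ) g ((K : ℝ) / L) (L * (1 + M))
    (by positivity) hlipT hae' hgmeas
  intro s hs t ht
  have h1 : γ.deriv s - γ.deriv t = L • (tangent γ s - tangent γ t) := by
    rw [smul_sub, ← deriv_eq_smul_tangent hcs hs, ← deriv_eq_smul_tangent hcs ht]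
  rw [h1, norm_smul, Real.norm_eq_abs, abs_of_pos hL]
  calc L * ‖tangent γ s - tangent γ t‖ ≤ L * (L * (1 + M) * |s - t|) :=
        mul_le_mul_of_nonneg_left (key s hs t ht) hL.le
    _ = L ^ 2 * (1 + M) * |s - t| := by ring

/-- Taylor estimate from a Lipschitz bound on the derivative. -/
lemma curve_taylor (γ : C1Curve 0 1) (Cl : ℝ) (hCl : 0 ≤ Cl)
    (hlip : ∀ s ∈ Icc (0:ℝ) 1, ∀ t ∈ Icc (0:ℝ) 1, ‖γ.deriv s - γ.deriv t‖ ≤ Cl * |s - t|)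
    {x y : ℝ} (hx : x ∈ Icc (0:ℝ) 1) (hy : y ∈ Icc (0:ℝ) 1) :
    ‖γ.toFun y - γ.toFun x - (y - x) • γ.deriv x‖ ≤ Cl * (y - x)^2 := by
  have hsub : Set.uIcc x y ⊆ Icc (0:ℝ) 1 := by
    rw [Set.uIcc_eq_union]
    exact Set.union_subset (Set.Icc_subset_Icc hx.1 hy.2) (Set.Icc_subset_Icc hy.1 hx.2)
  have habs : ∀ u ∈ Set.uIcc x y, |u - x| ≤ |y - x| := by
    intro u hu
    rcases le_total x y with hxy | hxy
    · rw [Set.uIcc_of_le hxy] at hu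
      rw [abs_of_nonneg (by linarith [hu.1]), abs_of_nonneg (by linarith)]
      linarith [hu.2]
    · rw [Set.uIcc_of_ge hxy] at hu
      rw [abs_of_nonpos (by linarith [hu.2]), abs_of_nonpos (by linarith)]
      linarith [hu.1]
  have hmv := Convex.norm_image_sub_le_of_norm_hasFDerivWithin_le'
    (f := γ.toFun) (f' := fun u => ContinuousLinearMap.smulRight (1 : ℝ →L[ℝ] ℝ) (γ.deriv u))
    (φ := ContinuousLinearMap.smulRight (1 : ℝ →L[ℝ] ℝ) (γ.deriv x))
    (C := Cl * |y - x|) (s := Set.uIcc x y)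
    (fun u hu => ((γ.hasDeriv u (hsub hu)).mono hsub).hasFDerivWithinAt)
    (fun u hu => by
      have he : ContinuousLinearMap.smulRight (1 : ℝ →L[ℝ] ℝ) (γ.deriv u)
          - ContinuousLinearMap.smulRight (1 : ℝ →L[ℝ] ℝ) (γ.deriv x)
          = ContinuousLinearMap.smulRight (1 : ℝ →L[ℝ] ℝ) (γ.deriv u - γ.deriv x) := by
        ext z
        simp [smul_sub]
      rw [he, ContinuousLinearMap.norm_smulRight_apply, ContinuousLinearMap.one_def,
        ContinuousLinearMap.norm_id, one_mul]
      exact (hlip u (hsub hu) x hx).trans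
        (mul_le_mul_of_nonneg_left (habs u hu) hCl))
    (convex_uIcc x y) (Set.left_mem_uIcc) (Set.right_mem_uIcc)
  rw [ContinuousLinearMap.smulRight_apply, ContinuousLinearMap.one_apply] at hmv
  calc ‖γ.toFun y - γ.toFun x - (y - x) • γ.deriv x‖ ≤ Cl * |y - x| * ‖y - x‖ := hmv
    _ = Cl * (y - x)^2 := by
        rw [Real.norm_eq_abs, mul_assoc, abs_mul_abs_self]
        ring

end CurveLemmas


section Assembly

lemma curve_move (γ : C1Curve 0 1) {x y : ℝ} (hx : x ∈ Icc (0:ℝ) 1) (hy : y ∈ Icc (0:ℝ) 1)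
    (Cb : ℝ) (hCb : ∀ u ∈ Icc (0:ℝ) 1, ‖γ.deriv u‖ ≤ Cb) :
    ‖γ.toFun y - γ.toFun x‖ ≤ Cb * |y - x| := by
  have := Convex.norm_image_sub_le_of_norm_hasDerivWithin_le
    (f := γ.toFun) (f' := γ.deriv) (C := Cb) (s := Icc (0:ℝ) 1)
    γ.hasDeriv hCb (convex_Icc 0 1) hx hy
  rwa [Real.norm_eq_abs] at this

lemma deriv_diff_bound (β α : C1Curve 0 1) (Cb Ca dd : ℝ) (hCb : 0 ≤ Cb) (hCa : 0 ≤ Ca)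
    (hdd : 0 ≤ dd)
    (hlb : ∀ s ∈ Icc (0:ℝ) 1, ∀ t ∈ Icc (0:ℝ) 1, ‖β.deriv s - β.deriv t‖ ≤ Cb * |s - t|)
    (hla : ∀ s ∈ Icc (0:ℝ) 1, ∀ t ∈ Icc (0:ℝ) 1, ‖α.deriv s - α.deriv t‖ ≤ Ca * |s - t|)
    (hd : ∀ t ∈ Icc (0:ℝ) 1, ‖β.toFun t - α.toFun t‖ ≤ dd)
    (h : ℝ) (hh0 : 0 < h) (hh : h ≤ 1/2) :
    ∀ t ∈ Icc (0:ℝ) 1, ‖β.deriv t - α.deriv t‖ ≤ 2*dd/h + (Cb + Ca)*h := by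
  intro t ht
  obtain ⟨t', ht', hdiff⟩ : ∃ t', t' ∈ Icc (0:ℝ) 1 ∧ |t' - t| = h := by
    rcases le_or_gt t (1/2) with hc | hc
    · exact ⟨t + h, ⟨by linarith [ht.1], by linarith⟩, by rw [add_sub_cancel_left, abs_of_pos hh0]⟩
    · exact ⟨t - h, ⟨by linarith, by linarith [ht.2]⟩,
        by rw [show t - h - t = -h by ring, abs_neg, abs_of_pos hh0]⟩
  have hA := curve_taylor β Cb hCb hlb ht ht'
  have hB := curve_taylor α Ca hCa hla ht ht'
  have hsq : (t' - t)^2 = h^2 := by rw [← sq_abs, hdiff]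
  rw [hsq] at hA hB
  have hC : ‖(β.toFun t' - α.toFun t') - (β.toFun t - α.toFun t)‖ ≤ 2 * dd := by
    calc ‖(β.toFun t' - α.toFun t') - (β.toFun t - α.toFun t)‖
        ≤ ‖β.toFun t' - α.toFun t'‖ + ‖β.toFun t - α.toFun t‖ := norm_sub_le _ _
      _ ≤ dd + dd := add_le_add (hd t' ht') (hd t ht)
      _ = 2 * dd := by ring
  have hkey : h * ‖β.deriv t - α.deriv t‖ ≤ 2*dd + (Cb + Ca)*h^2 := by
    have e : (t' - t) • (β.deriv t - α.deriv t)
        = ((β.toFun t' - α.toFun t') - (β.toFun t - α.toFun t))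
          - (β.toFun t' - β.toFun t - (t' - t) • β.deriv t)
          + (α.toFun t' - α.toFun t - (t' - t) • α.deriv t) := by
      rw [smul_sub]; abel
    have : ‖(t' - t) • (β.deriv t - α.deriv t)‖ ≤ 2*dd + Cb * h^2 + Ca * h^2 := by
      rw [e]
      calc ‖_ - _ + _‖ ≤ ‖((β.toFun t' - α.toFun t') - (β.toFun t - α.toFun t))
            - (β.toFun t' - β.toFun t - (t' - t) • β.deriv t)‖
            + ‖α.toFun t' - α.toFun t - (t' - t) • α.deriv t‖ := norm_add_le _ _
        _ ≤ ‖(β.toFun t' - α.toFun t') - (β.toFun t - α.toFun t)‖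
            + ‖β.toFun t' - β.toFun t - (t' - t) • β.deriv t‖
            + ‖α.toFun t' - α.toFun t - (t' - t) • α.deriv t‖ := by
              have := norm_sub_le ((β.toFun t' - α.toFun t') - (β.toFun t - α.toFun t))
                (β.toFun t' - β.toFun t - (t' - t) • β.deriv t)
              linarith
        _ ≤ 2*dd + Cb * h^2 + Ca * h^2 := by linarith
    rw [norm_smul, Real.norm_eq_abs, hdiff] at this
    linarith
  have hW : ‖β.deriv t - α.deriv t‖ = (h * ‖β.deriv t - α.deriv t‖) / h := by
    field_simp
  rw [hW]
  calc (h * ‖β.deriv t - α.deriv t‖) / h ≤ (2*dd + (Cb + Ca)*h^2) / h :=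
        (div_le_div_iff_of_pos_right hh0).mpr hkey
    _ = 2*dd/h + (Cb + Ca)*h := by field_simp

end Assembly



set_option maxHeartbeats 1000000 in
/-- Theorem thm-2. -/
theorem stmt_12 (κ₁ κ₂ : ℝ) (h12 : κ₁ < κ₂) (P Q : SO3)
    (A : ℕ → C1Curve 0 1) (α : C1Curve 0 1)
    (hA : ∀ k, ConstantSpeed (A k) ∧
      MemP κ₁ κ₂ (P : Matrix (Fin 3) (Fin 3) ℝ) (Q : Matrix (Fin 3) (Fin 3) ℝ) (A k))
    (hα : ConstantSpeed α ∧
      MemP κ₁ κ₂ (P : Matrix (Fin 3) (Fin 3) ℝ) (Q : Matrix (Fin 3) (Fin 3) ℝ) α) :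
    Filter.Tendsto (fun k => d0 (A k) α) Filter.atTop (𝓝 0) ↔
    Filter.Tendsto (fun k => d1bar (A k) α) Filter.atTop (𝓝 0) := by
  haveI : Nonempty (Set.Icc (0:ℝ) 1) := ⟨⟨0, by norm_num⟩⟩
  obtain ⟨hcsα, hmemα⟩ := hα
  set M := max |κ₁| |κ₂| with hMdef
  have hM : 0 ≤ M := le_trans (abs_nonneg κ₁) (le_max_left _ _)
  set m := 1 + M with hmdef
  have hm1 : (1:ℝ) ≤ m := by rw [hmdef]; linarith
  have hmpos : (0:ℝ) < m := by linarith
  set L := clength α with hLdef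
  have hLpos : 0 < L := clength_pos hcsα
  have hlipα : ∀ s ∈ Icc (0:ℝ) 1, ∀ t ∈ Icc (0:ℝ) 1,
      ‖α.deriv s - α.deriv t‖ ≤ L^2*m*|s - t| := deriv_lipschitz hcsα hmemα
  have hlipk : ∀ k, ∀ s ∈ Icc (0:ℝ) 1, ∀ t ∈ Icc (0:ℝ) 1,
      ‖(A k).deriv s - (A k).deriv t‖ ≤ (clength (A k))^2*m*|s - t| :=
    fun k => deriv_lipschitz (hA k).1 (hA k).2
  have hLk : ∀ k, 0 < clength (A k) := fun k => clength_pos (hA k).1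
  have h0I : (0:ℝ) ∈ Icc (0:ℝ) 1 := by norm_num
  -- sup facts
  have hbdd0 : ∀ k, BddAbove (Set.range fun t : Set.Icc (0:ℝ) 1 =>
      sdist ((A k).toFun ↑t) (α.toFun ↑t)) := by
    intro k
    refine ⟨π, ?_⟩
    rintro x ⟨t, rfl⟩
    exact sdist_le_pi' _ _
  have hd0le : ∀ k, ∀ t : ℝ, t ∈ Icc (0:ℝ) 1 →
      sdist ((A k).toFun t) (α.toFun t) ≤ d0 (A k) α := fun k t ht =>
    le_ciSup (hbdd0 k) (⟨t, ht⟩ : Set.Icc (0:ℝ) 1)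
  have hd0nn : ∀ k, 0 ≤ d0 (A k) α := fun k =>
    le_trans (sdist_nonneg' _ _) (hd0le k 0 h0I)
  have hbdd1 : ∀ k, BddAbove (Set.range fun t : Set.Icc (0:ℝ) 1 =>
      sdist ((A k).toFun ↑t) (α.toFun ↑t) + ‖(A k).deriv ↑t - α.deriv ↑t‖) := by
    intro k
    refine ⟨π + (clength (A k) + L), ?_⟩
    rintro x ⟨t, rfl⟩
    apply add_le_add (sdist_le_pi' _ _)
    calc ‖(A k).deriv ↑t - α.deriv ↑t‖ ≤ ‖(A k).deriv ↑t‖ + ‖α.deriv ↑t‖ := norm_sub_le _ _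
      _ = clength (A k) + L := by rw [(hA k).1 ↑t t.2, hcsα ↑t t.2]
  have hd1le : ∀ k, ∀ t : ℝ, ∀ ht : t ∈ Icc (0:ℝ) 1,
      sdist ((A k).toFun t) (α.toFun t) + ‖(A k).deriv t - α.deriv t‖ ≤ d1bar (A k) α :=
    fun k t ht => le_ciSup (hbdd1 k) (⟨t, ht⟩ : Set.Icc (0:ℝ) 1)
  have hd1nn : ∀ k, 0 ≤ d1bar (A k) α := fun k =>
    le_trans (add_nonneg (sdist_nonneg' _ _) (norm_nonneg _)) (hd1le k 0 h0I)
  constructor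
  · -- hard direction
    intro hd0
    have hEuc : ∀ k, ∀ t ∈ Icc (0:ℝ) 1, ‖(A k).toFun t - α.toFun t‖ ≤ d0 (A k) α :=
      fun k t ht =>
        (norm_sub_le_sdist ((A k).mem_sphere t ht) (α.mem_sphere t ht)).trans (hd0le k t ht)
    set Λ := max (4*L + 1) (1/m) with hΛdef
    have hΛpos : 0 < Λ := lt_of_lt_of_le (by positivity) (le_max_right _ _)
    -- eventual length bound
    have hev : ∀ᶠ k in atTop, clength (A k) ≤ Λ := by
      have hsmall : ∀ᶠ k in atTop, d0 (A k) α < 1/(16*m) :=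
        hd0.eventually_lt_const (by positivity)
      filter_upwards [hsmall] with k hk
      by_contra hcon
      push_neg at hcon
      set Lk := clength (A k) with hLkdef
      have hLk1 : 1/m < Lk := lt_of_le_of_lt (le_max_right _ _) hcon
      have hLk2 : 4*L + 1 < Lk := lt_of_le_of_lt (le_max_left _ _) hcon
      have hLkpos : 0 < Lk := hLk k
      set h : ℝ := 1/(2*Lk*m) with hhdef
      have hh0 : 0 < h := by positivity
      have hh1 : h ≤ 1/2 := by
        rw [hhdef, div_le_div_iff₀ (by positivity) (by norm_num)]
        rw [div_lt_iff₀ hmpos] at hLk1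
        nlinarith
      have hmemh : h ∈ Icc (0:ℝ) 1 := ⟨hh0.le, by linarith⟩
      have hT := curve_taylor (A k) (Lk^2*m) (by positivity) (hlipk k) h0I hmemh
      rw [sub_zero] at hT
      have hTa : h*Lk - Lk^2*m*h^2 ≤ ‖(A k).toFun h - (A k).toFun 0‖ := by
        have h1 := norm_sub_norm_le (h • (A k).deriv 0)
          ((A k).toFun h - (A k).toFun 0)
        rw [show ‖h • (A k).deriv 0 - ((A k).toFun h - (A k).toFun 0)‖
            = ‖(A k).toFun h - (A k).toFun 0 - h • (A k).deriv 0‖ from norm_sub_rev _ _] at h1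
        have h2 : ‖h • (A k).deriv 0‖ = h * Lk := by
          rw [norm_smul, Real.norm_eq_abs, abs_of_pos hh0, (hA k).1 0 h0I]
        clear_value M m L Lk h
        linarith [hT, h1, h2.le, h2.ge]
      have hTb : ‖(A k).toFun h - (A k).toFun 0‖ ≤ 2 * d0 (A k) α + L * h := by
        have hmv : ‖α.toFun h - α.toFun 0‖ ≤ L * |h - 0| :=
          curve_move α h0I hmemh L (fun u hu => le_of_eq (hcsα u hu))
        rw [sub_zero, abs_of_pos hh0] at hmv
        calc ‖(A k).toFun h - (A k).toFun 0‖
            ≤ ‖(A k).toFun h - α.toFun h‖ + ‖α.toFun h - α.toFun 0‖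
              + ‖α.toFun 0 - (A k).toFun 0‖ := by
              have e : (A k).toFun h - (A k).toFun 0 = ((A k).toFun h - α.toFun h)
                  + (α.toFun h - α.toFun 0) + (α.toFun 0 - (A k).toFun 0) := by abel
              rw [e]
              exact (norm_add_le _ _).trans (add_le_add (norm_add_le _ _) le_rfl)
          _ ≤ d0 (A k) α + L * h + d0 (A k) α := by
              have := hEuc k 0 h0I
              rw [norm_sub_rev] at this
              exact add_le_add (add_le_add (hEuc k h hmemh) hmv) this
          _ = 2 * d0 (A k) α + L * h := by ring
      -- numeric contradiction
      have hm0 : m ≠ 0 := hmpos.ne'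
      have hLk0 : Lk ≠ 0 := hLkpos.ne'
      clear_value M m L Lk h
      have e1 : h * Lk = 1/(2*m) := by
        rw [hhdef]; field_simp
      have e2 : Lk^2*m*h^2 = 1/(4*m) := by
        rw [hhdef]; field_simp; ring
      have e3 : L * h ≤ 1/(8*m) := by
        rw [hhdef]
        rw [show L * (1/(2*Lk*m)) = L/(2*Lk*m) from by ring]
        rw [div_le_div_iff₀ (by positivity) (by positivity)]
        nlinarith [hLpos, hLk2, hmpos]
      rw [e1, e2] at hTa
      have hcomb : 1/(2*m) - 1/(4*m) ≤ 2 * d0 (A k) α + 1/(8*m) :=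
        by linarith [hTa.trans hTb, e3]
      have e4 : 1/(2*m) - 1/(4*m) - 1/(8*m) = 2 * (1/(16*m)) := by
        field_simp; ring
      linarith [hcomb, e4, hk]
    -- conclude convergence of d1bar
    set Cmax := (Λ^2 + L^2)*m with hCdef
    have hCpos : 0 < Cmax := by positivity
    rw [Metric.tendsto_atTop]
    intro ε hε
    set h := min (1/2) (ε/(4*Cmax)) with hhdef
    have hh0 : 0 < h := lt_min (by norm_num) (by positivity)
    have hh : h ≤ 1/2 := min_le_left _ _
    have hev2 : ∀ᶠ k in atTop, d0 (A k) α < min (ε/4) (ε*h/8) :=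
      hd0.eventually_lt_const (lt_min (by positivity) (by positivity))
    have hboth := hev.and hev2
    rw [Filter.eventually_atTop] at hboth
    obtain ⟨N, hN⟩ := hboth
    refine ⟨N, fun k hk => ?_⟩
    obtain ⟨hΛk, hsm⟩ := hN k hk
    have hdb := deriv_diff_bound (A k) α ((clength (A k))^2*m) (L^2*m) (d0 (A k) α)
      (by positivity) (by positivity) (hd0nn k) (hlipk k) hlipα (hEuc k) h hh0 hh
    have hd1 : d1bar (A k) α ≤ d0 (A k) α + (2*(d0 (A k) α)/h + Cmax*h) := by
      apply ciSup_le
      rintro ⟨t, ht⟩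
      have h1 := hd0le k t ht
      have h2 := hdb t ht
      have h3 : ((clength (A k))^2*m + L^2*m)*h ≤ Cmax*h := by
        apply mul_le_mul_of_nonneg_right _ hh0.le
        rw [hCdef]
        have : (clength (A k))^2 ≤ Λ^2 := by nlinarith [hLk k]
        nlinarith
      simp only
      have h4 : ‖(A k).deriv t - α.deriv t‖ ≤ 2 * d0 (A k) α / h + Cmax * h :=
        h2.trans (add_le_add le_rfl h3)
      exact add_le_add h1 h4
    rw [Real.dist_eq, sub_zero, abs_of_nonneg (hd1nn k)]
    have hb1 : d0 (A k) α < ε/4 := lt_of_lt_of_le hsm (min_le_left _ _)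
    have hb2 : 2*(d0 (A k) α)/h < ε/4 := by
      have h5 := lt_of_lt_of_le hsm (min_le_right _ _)
      rw [div_lt_iff₀ hh0]
      nlinarith [h5, hh0]
    have hb3 : Cmax*h ≤ ε/4 := by
      have h6 : h ≤ ε/(4*Cmax) := min_le_right _ _
      calc Cmax*h ≤ Cmax*(ε/(4*Cmax)) := mul_le_mul_of_nonneg_left h6 hCpos.le
        _ = ε/4 := by field_simp
    clear_value M m L Λ Cmax h
    linarith [hd1, hb1, hb2, hb3]
  · -- easy direction
    intro hd1
    have hle : ∀ k, d0 (A k) α ≤ d1bar (A k) α := by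
      intro k
      apply ciSup_le
      intro t
      exact le_trans (le_add_of_nonneg_right (norm_nonneg _)) (le_ciSup (hbdd1 k) t)
    exact squeeze_zero hd0nn hle hd1


end Curves
end
end
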